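/- Let K be a perfect field of characteristic 0 or of characteristic greater than d, and let F ∈ K⟦x⟧[y] be a square-free Weierstrass polynomial of degree d ≥ 1 in y. Then x^{d−1} divides the resultant Res_y(F, ∂F/∂y) in K⟦x⟧. Equivalently, the x-adic valuation v_F of the discriminant of F satisfies d − 1 ≤ v_F. -/

import Mathlib

open Polynomial

/-- The Sylvester matrix of two polynomials `p`, `q` relative to the sizes
`m` (for `p`) and `n` (for `q`): a square matrix of size `m + n` whose first `n` rows
carry the shifted coefficients of `p` and whose last `m` rows carry the shifted
coefficients of `q`. -/
noncomputable def sylvesterMatrix {R : Type*} [CommRing R] (m n : ℕ) (p q : R[X]) :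
    Matrix (Fin (m + n)) (Fin (m + n)) R :=
  Matrix.of fun i j =>
    if (i : ℕ) < n then
      (if (i : ℕ) ≤ (j : ℕ) ∧ (j : ℕ) ≤ (i : ℕ) + m then p.coeff ((j : ℕ) - (i : ℕ)) else 0)
    else
      (if (i : ℕ) - n ≤ (j : ℕ) ∧ (j : ℕ) ≤ ((i : ℕ) - n) + n then
        q.coeff ((j : ℕ) - ((i : ℕ) - n)) else 0)

/-- The resultant `Res_y(p, q)` of two polynomials, as the determinant of their
Sylvester matrix. -/
noncomputable def resultant {R : Type*} [CommRing R] (p q : R[X]) : R :=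
  (sylvesterMatrix p.natDegree q.natDegree p q).det

/-- **Lower bound for the discriminant valuation of a square-free Weierstrass
polynomial.** Let `K` be a perfect field of characteristic `0` or `> d` and let
`F ∈ K⟦x⟧[y]` be a square-free Weierstrass polynomial of degree `d ≥ 1`. Then
`x^(d-1)` divides the resultant `Res_y(F, ∂F/∂y)` in `K⟦x⟧`, i.e. the discriminant
valuation `v_F` of `F` satisfies `d - 1 ≤ v_F`. -/
theorem discriminant_valuation_ge_of_weierstrass {K : Type*} [Field K] [PerfectField K]
    (d : ℕ) (hchar : ringChar K = 0 ∨ d < ringChar K)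
    (F : Polynomial (PowerSeries K)) (hd : 1 ≤ d)
    (hmonic : F.Monic) (hdeg : F.natDegree = d)
    (hweier : ∀ i < d, PowerSeries.constantCoeff (F.coeff i) = 0)
    (hsqf : Squarefree F) :
    (PowerSeries.X : PowerSeries K) ^ (d - 1) ∣
      _root_.resultant F (Polynomial.derivative F) := by
  classical
  -- `(d : K) ≠ 0`
  have hdK : (d : K) ≠ 0 := by
    intro h
    have hdvd : ringChar K ∣ d := (ringChar.spec K d).mp h
    rcases hchar with h0 | hlt
    · rw [h0, zero_dvd_iff] at hdvd; omega
    · have : ringChar K ≤ d := Nat.le_of_dvd (by omega) hdvd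
      omega
  set m := F.natDegree with hm
  set n := (derivative F).natDegree with hn
  -- the derivative has degree exactly `d - 1`
  have hcoeff_top : (derivative F).coeff (d - 1) ≠ 0 := by
    rw [coeff_derivative]
    have h1 : ((d - 1 : ℕ) : PowerSeries K) + 1 = (d : PowerSeries K) := by
      rw [← Nat.cast_add_one]; congr 1; omega
    have h2 : F.coeff (d - 1 + 1) = 1 := by
      rw [show d - 1 + 1 = d by omega, ← hdeg]; exact hmonic.coeff_natDegree
    rw [h2, h1, one_mul]
    intro h
    apply hdK
    simpa using congrArg (PowerSeries.constantCoeff) h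
  have hnd : n = d - 1 := by
    apply le_antisymm
    · have := natDegree_derivative_le F
      rw [← hn, ← hm, hdeg] at this
      exact this
    · exact le_natDegree_of_ne_zero hcoeff_top
  -- every entry in a column of index `< d - 1` is divisible by `X`
  have hcol : ∀ (j : Fin (m + n)), (j : ℕ) < d - 1 →
      ∀ i, (PowerSeries.X : PowerSeries K) ∣ sylvesterMatrix m n F (derivative F) i j := by
    intro j hj i
    rw [PowerSeries.X_dvd_iff]
    simp only [sylvesterMatrix, Matrix.of_apply]
    split_ifs with h1 h2 h3
    · exact hweier _ (by omega)
    · simp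
    · rw [coeff_derivative, map_mul]
      rw [hweier ((j : ℕ) - ((i : ℕ) - n) + 1) (by omega)]
      simp
    · simp
  -- the set of such columns
  have hdlt : d - 1 < m + n := by omega
  set S : Finset (Fin (m + n)) := Finset.univ.filter (fun j => (j : ℕ) < d - 1) with hS
  have hScard : S.card = d - 1 := by
    have : S = Finset.Iio (⟨d - 1, hdlt⟩ : Fin (m + n)) := by
      ext j
      simp [hS, Fin.lt_def]
    rw [this, Fin.card_Iio]
  -- conclude by expanding the determinant
  rw [_root_.resultant, ← hm, ← hn, Matrix.det_apply]
  apply Finset.dvd_sum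
  intro σ _
  rw [Units.smul_def, zsmul_eq_mul]
  apply Dvd.dvd.mul_left
  rw [← Finset.prod_filter_mul_prod_filter_not (Finset.univ : Finset (Fin (m + n))) (fun j => (j : ℕ) < d - 1)]
  apply Dvd.dvd.mul_right
  calc (PowerSeries.X : PowerSeries K) ^ (d - 1)
      = ∏ _j ∈ S, (PowerSeries.X : PowerSeries K) := by
        rw [Finset.prod_const, hScard]
    _ ∣ ∏ j ∈ S, sylvesterMatrix m n F (derivative F) (σ j) j := by
        apply Finset.prod_dvd_prod_of_dvd
        intro j hj
        exact hcol j (by simpa [hS] using hj) (σ j)
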